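/- (Latent projection preserves confounding.) Let G be a directed mixed graph and M ⊆ V(G). For all distinct nodes X, Y ∈ M: if X and Y are confounded in G, then X and Y are confounded in the latent projection of G onto M. Consequently, if X and Y are unconfounded in the latent projection of G onto M, then they are unconfounded in G. -/

import Mathlib

/-- The three ways an edge of a directed mixed graph can occur on a walk,
when traversed from left to right: `fwd` is a directed edge pointing to the
right node, `bwd` is a directed edge pointing to the left node, and `bi` is
a bidirected edge. -/
inductive EdgeDir : Type
  | fwd
  | bwd
  | bi
  deriving DecidableEq

/-- The edge has an arrowhead at its right endpoint. -/
def EdgeDir.headAtRight (e : EdgeDir) : Prop := e = .fwd ∨ e = .bi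

/-- The edge has an arrowhead at its left endpoint. -/
def EdgeDir.headAtLeft (e : EdgeDir) : Prop := e = .bwd ∨ e = .bi

/-- A directed mixed graph (DMG) on node type `α`: an irreflexive relation of
directed edges and an irreflexive symmetric relation of bidirected edges. -/
structure DMG (α : Type*) where
  dir : α → α → Prop
  bidir : α → α → Prop
  dir_irrefl : ∀ x, ¬ dir x x
  bidir_irrefl : ∀ x, ¬ bidir x x
  bidir_symm : ∀ x y, bidir x y → bidir y x

namespace DMG

variable {α : Type*}

/-- `G.Anc x y`: there is a directed path (possibly of length zero) from `x` to `y`,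
i.e. `x` is an ancestor of `y` (equivalently, `y` is a descendant of `x`). -/
def Anc (G : DMG α) (x y : α) : Prop := Relation.ReflTransGen G.dir x y

/-- Ancestors of a set of nodes. -/
def ancSet (G : DMG α) (S : Set α) : Set α := {x | ∃ y ∈ S, G.Anc x y}

/-- The strongly connected component of `x`: all nodes that are both ancestors
and descendants of `x`. -/
def scc (G : DMG α) (x : α) : Set α := {y | G.Anc y x ∧ G.Anc x y}

/-- Validity of one step of a walk, from `a` to `b`, traversed as `e`. -/
def StepValid (G : DMG α) (a : α) (e : EdgeDir) (b : α) : Prop :=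
  match e with
  | .fwd => G.dir a b
  | .bwd => G.dir b a
  | .bi => G.bidir a b

/-- A walk from `x` to `y` in a DMG `G`: an alternating sequence of `n + 1` nodes
and `n` edges of `G`. -/
structure Walk (G : DMG α) (x y : α) where
  n : ℕ
  node : Fin (n + 1) → α
  edge : Fin n → EdgeDir
  first_eq : node 0 = x
  last_eq : node (Fin.last n) = y
  valid : ∀ i : Fin n, G.StepValid (node i.castSucc) (edge i) (node i.succ)

namespace Walk

variable {G : DMG α} {x y : α}

/-- A path is a walk all of whose nodes are distinct. -/
def IsPath (w : Walk G x y) : Prop := Function.Injective w.node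

/-- The interior node at position `i + 1` of the walk is a collider: both
adjacent edges have an arrowhead at it. -/
def IsColliderAt (w : Walk G x y) (i : ℕ) (h : i + 1 < w.n) : Prop :=
  (w.edge ⟨i, by omega⟩).headAtRight ∧ (w.edge ⟨i + 1, h⟩).headAtLeft

/-- The walk is σ-blocked by the conditioning set `C`. -/
def Blocked (w : Walk G x y) (C : Set α) : Prop :=
  x ∈ C ∨ y ∈ C ∨
  (∃ (i : ℕ) (h : i + 1 < w.n), w.IsColliderAt i h ∧
    w.node ⟨i + 1, by omega⟩ ∉ G.ancSet C) ∨
  (∃ (i : ℕ) (h : i + 1 < w.n), ¬ w.IsColliderAt i h ∧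
    w.node ⟨i + 1, by omega⟩ ∈ C ∧
    ((w.edge ⟨i, by omega⟩ = .bwd ∧
        w.node ⟨i, by omega⟩ ∉ G.scc (w.node ⟨i + 1, by omega⟩)) ∨
     (w.edge ⟨i + 1, h⟩ = .fwd ∧
        w.node ⟨i + 2, by omega⟩ ∉ G.scc (w.node ⟨i + 1, by omega⟩))))

end Walk

/-- σ-separation: every path between `x` and `y` is σ-blocked by `C`. -/
def sigmaSep (G : DMG α) (x y : α) (C : Set α) : Prop :=
  ∀ w : Walk G x y, w.IsPath → w.Blocked C

/-- A confounding path between `x` and `y`: a path of nonzero length whose first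
edge has an arrowhead at `x`, whose last edge has an arrowhead at `y`, and all of
whose non-endpoint nodes are non-colliders. -/
def IsConfoundingPath {G : DMG α} {x y : α} (w : Walk G x y) : Prop :=
  w.IsPath ∧ ∃ h : 0 < w.n,
    (w.edge ⟨0, h⟩).headAtLeft ∧ (w.edge ⟨w.n - 1, by omega⟩).headAtRight ∧
    ∀ (i : ℕ) (hi : i + 1 < w.n), ¬ w.IsColliderAt i hi

/-- `x` and `y` are confounded in `G` if some confounding path connects them. -/
def Confounded (G : DMG α) (x y : α) : Prop := ∃ w : Walk G x y, IsConfoundingPath w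

/-- A directed path from `x` to `y` (of length at least one) all of whose
intermediate nodes avoid `M`. -/
def DirPathAvoiding (G : DMG α) (M : Set α) (x y : α) : Prop :=
  ∃ l : List α, List.Chain G.dir x (l ++ [y]) ∧ ∀ v ∈ l, v ∉ M

/-- A path between `x` and `y` with an arrowhead at `x` and an arrowhead at `y`,
all of whose intermediate nodes lie outside `M` and are non-colliders. -/
def BidirPathAvoiding (G : DMG α) (M : Set α) (x y : α) : Prop :=
  ∃ w : Walk G x y, w.IsPath ∧ (∃ h : 0 < w.n,
    (w.edge ⟨0, h⟩).headAtLeft ∧ (w.edge ⟨w.n - 1, by omega⟩).headAtRight) ∧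
    ∀ (i : ℕ) (hi : i + 1 < w.n),
      w.node ⟨i + 1, by omega⟩ ∉ M ∧ ¬ w.IsColliderAt i hi

/-- The latent projection of `G` onto the node set `M`. -/
def latentProj (G : DMG α) (M : Set α) : DMG M where
  dir a b := a.1 ≠ b.1 ∧ DirPathAvoiding G M a.1 b.1
  bidir a b := a.1 ≠ b.1 ∧
    (BidirPathAvoiding G M a.1 b.1 ∨ BidirPathAvoiding G M b.1 a.1)
  dir_irrefl := fun _a h => h.1 rfl
  bidir_irrefl := fun _a h => h.1 rfl
  bidir_symm := fun _a _b h => ⟨Ne.symm h.1, Or.symm h.2⟩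

end DMG

section Aux

namespace DMG

open List

variable {α : Type*}

/-- Build a walk from total node/edge functions. -/
def Walk.ofFn (G : DMG α) (m : ℕ) (N : ℕ → α) (E : ℕ → EdgeDir) {x y : α}
    (h0 : N 0 = x) (hm : N m = y)
    (hv : ∀ t, t < m → G.StepValid (N t) (E t) (N (t + 1))) : Walk G x y where
  n := m
  node i := N i.val
  edge i := E i.val
  first_eq := by simpa using h0
  last_eq := by simpa using hm
  valid i := by simpa using hv i.val i.isLt

@[simp] lemma Walk.ofFn_n (G : DMG α) (m : ℕ) (N : ℕ → α) (E : ℕ → EdgeDir) {x y : α}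
    (h0 : N 0 = x) (hm : N m = y) (hv : ∀ t, t < m → G.StepValid (N t) (E t) (N (t + 1))) :
    (Walk.ofFn G m N E h0 hm hv).n = m := rfl

@[simp] lemma Walk.ofFn_node (G : DMG α) (m : ℕ) (N : ℕ → α) (E : ℕ → EdgeDir) {x y : α}
    (h0 : N 0 = x) (hm : N m = y) (hv : ∀ t, t < m → G.StepValid (N t) (E t) (N (t + 1)))
    (i : Fin (m + 1)) : (Walk.ofFn G m N E h0 hm hv).node i = N i.val := rfl

@[simp] lemma Walk.ofFn_edge (G : DMG α) (m : ℕ) (N : ℕ → α) (E : ℕ → EdgeDir) {x y : α}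
    (h0 : N 0 = x) (hm : N m = y) (hv : ∀ t, t < m → G.StepValid (N t) (E t) (N (t + 1)))
    (i : Fin m) : (Walk.ofFn G m N E h0 hm hv).edge i = E i.val := rfl

/-- Master lemma: build a confounding path from a list of nodes and an
edge-direction function with pattern `bwd* (bi|∅) fwd*`. -/
lemma confounded_of_list (H : DMG α) (X Y : α) (L : List α) (E : ℕ → EdgeDir)
    (hlen : 2 ≤ L.length)
    (hhead : L.head? = some X) (hlast : L.getLast? = some Y)
    (hnd : L.Nodup)
    (hv : ∀ t (h : t + 1 < L.length), H.StepValid (L[t]) (E t) (L[t+1]))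
    (hE0 : (E 0).headAtLeft) (hEl : (E (L.length - 2)).headAtRight)
    (c : ℕ) (hc1 : ∀ j, j < c → E j = .bwd) (hc2 : ∀ j, c < j → E j = .fwd) :
    H.Confounded X Y := by
  have hL0 : 0 < L.length := by omega
  have hgetD : ∀ t (h : t < L.length), L.getD t X = L[t] := fun t h => List.getD_eq_getElem L X h
  have hN0 : L.getD 0 X = X := by
    rw [hgetD 0 hL0]
    have h0 : L.head? = L[0]? := List.head?_eq_getElem?
    rw [hhead, List.getElem?_eq_getElem hL0] at h0
    exact (Option.some.inj h0).symm
  have hNm : L.getD (L.length - 1) X = Y := by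
    rw [hgetD _ (by omega)]
    have h0 : L.getLast? = L[L.length - 1]? := List.getLast?_eq_getElem?
    rw [hlast, List.getElem?_eq_getElem (show L.length - 1 < L.length by omega)] at h0
    exact (Option.some.inj h0).symm
  refine ⟨Walk.ofFn H (L.length - 1) (fun t => L.getD t X) E hN0 hNm ?_, ?_, ?_⟩
  · intro t ht
    show H.StepValid (L.getD t X) (E t) (L.getD (t+1) X)
    rw [hgetD t (by omega), hgetD (t+1) (by omega)]
    exact hv t (by omega)
  · -- IsPath
    intro i j hij
    have hi := i.isLt; have hj := j.isLt
    simp only [Walk.ofFn_n] at hi hj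
    have hij' : L.getD i.val X = L.getD j.val X := hij
    rw [hgetD i.val (by omega), hgetD j.val (by omega)] at hij'
    have := (List.nodup_iff_injective_get.1 hnd)
      (show L.get ⟨i.val, by omega⟩ = L.get ⟨j.val, by omega⟩ by simpa using hij')
    have h2 := congrArg Fin.val this
    exact Fin.ext h2
  · refine ⟨by simpa using (show 0 < L.length - 1 by omega), ?_, ?_, ?_⟩
    · simpa using hE0
    · show (E (L.length - 1 - 1)).headAtRight
      rw [show L.length - 1 - 1 = L.length - 2 by omega]
      exact hEl
    · intro i hi hcol
      simp only [Walk.ofFn_n] at hi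
      obtain ⟨h1, h2⟩ := hcol
      change (E i).headAtRight at h1
      change (E (i + 1)).headAtLeft at h2
      rcases Nat.lt_or_ge i c with hic | hic
      · rw [hc1 i hic] at h1
        rcases h1 with h | h <;> simp at h
      · rw [hc2 (i+1) (by omega)] at h2
        rcases h2 with h | h <;> simp at h

end DMG
end Aux
section Aux2
namespace DMG
open List
variable {α : Type*}

lemma chain'_range_map {R : α → α → Prop} (m : ℕ) (f : ℕ → α)
    (h : ∀ t, t + 1 < m → R (f t) (f (t + 1))) :
    List.Chain' R ((List.range m).map f) := by
  show List.IsChain R _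
  rw [List.isChain_map]
  cases m with
  | zero => simp
  | succ s => refine (List.isChain_range_succ _ s).2 ?_; intro t ht; exact h t (by omega)

lemma head?_range_map (m : ℕ) (f : ℕ → α) :
    ((List.range (m + 1)).map f).head? = some (f 0) := by
  rw [List.range_succ_eq_map]; simp

lemma getLast?_range_map (m : ℕ) (f : ℕ → α) :
    ((List.range (m + 1)).map f).getLast? = some (f m) := by
  rw [List.range_succ, List.map_append]
  simp

lemma nodup_range_map (m : ℕ) (f : ℕ → α)
    (hf : ∀ i j, i < m → j < m → f i = f j → i = j) :
    ((List.range m).map f).Nodup :=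
  List.Nodup.map_on
    (fun x hx y hy h => hf x y (List.mem_range.1 hx) (List.mem_range.1 hy) h)
    List.nodup_range

lemma mem_range_map {m : ℕ} {f : ℕ → α} {x : α} (hx : x ∈ (List.range m).map f) :
    ∃ t, t < m ∧ x = f t := by
  obtain ⟨t, ht, rfl⟩ := List.mem_map.1 hx
  exact ⟨t, List.mem_range.1 ht, rfl⟩

lemma reverse_range_map (m : ℕ) (f : ℕ → α) :
    ((List.range (m + 1)).map (fun t => f (m - t))).reverse = (List.range (m + 1)).map f := by
  apply List.ext_getElem (by simp)
  intro i h1 h2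
  simp only [List.length_map, List.length_range] at h2
  rw [List.getElem_reverse]
  simp only [List.getElem_map, List.getElem_range, List.length_map, List.length_range]
  congr 1
  omega

/-- Compress a directed path in `G` whose endpoints lie in `M` to a directed
path in the latent projection, passing through exactly the `M`-nodes. -/
lemma compress (G : DMG α) (M : Set α) :
    ∀ (q : List α), List.Chain' G.dir q → q.Nodup →
      (∀ x ∈ q.head?, x ∈ M) → (∀ x ∈ q.getLast?, x ∈ M) →
      ∃ ns : List M, List.Chain' (fun u v : M => (G.latentProj M).dir u v) ns ∧
        (ns.map Subtype.val) <+ q ∧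
        (ns.map Subtype.val).head? = q.head? ∧
        (ns.map Subtype.val).getLast? = q.getLast? := by
  classical
  suffices H : ∀ (N : ℕ) (q : List α), q.length ≤ N → List.Chain' G.dir q → q.Nodup →
      (∀ x ∈ q.head?, x ∈ M) → (∀ x ∈ q.getLast?, x ∈ M) →
      ∃ ns : List M, List.Chain' (fun u v : M => (G.latentProj M).dir u v) ns ∧
        (ns.map Subtype.val) <+ q ∧
        (ns.map Subtype.val).head? = q.head? ∧
        (ns.map Subtype.val).getLast? = q.getLast? by
    intro q; exact H q.length q le_rfl
  intro N
  induction N with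
  | zero =>
    intro q hq _ _ _ _
    have : q = [] := List.length_eq_zero_iff.1 (by omega)
    subst this
    exact ⟨[], by simp [List.Chain'], by simp, rfl, rfl⟩
  | succ N ih =>
    rintro (_ | ⟨a, _ | ⟨b, rest⟩⟩) hq hch hnd hh hl
    · exact ⟨[], by simp [List.Chain'], by simp, rfl, rfl⟩
    · exact ⟨[⟨a, hh a rfl⟩], by simp [List.Chain'], by simp, rfl, rfl⟩
    have ha : a ∈ M := hh a rfl
    set p : α → Bool := fun v => decide (v ∉ M) with hp
    set pre := (b :: rest).takeWhile p with hpre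
    set suf := (b :: rest).dropWhile p with hsuf
    have hps : pre ++ suf = b :: rest := List.takeWhile_append_dropWhile
    have hpreM : ∀ v ∈ pre, v ∉ M := by
      intro v hv
      have := List.mem_takeWhile_imp hv
      simpa [hp] using this
    have hqlast : (a :: b :: rest).getLast? = (b :: rest).getLast? := List.getLast?_cons_cons
    have hsufne : suf ≠ [] := by
      intro hemp
      obtain ⟨z, hz⟩ : ∃ z, (b :: rest).getLast? = some z :=
        ⟨_, List.getLast?_eq_getLast (by simp)⟩
      have hzM : z ∈ M := hl z (by rw [hqlast, hz]; rfl)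
      have hzmem : z ∈ b :: rest := List.mem_of_getLast? hz
      rw [← hps, hemp, List.append_nil] at hzmem
      exact hpreM _ hzmem hzM
    obtain ⟨m0, suf', hsuf'⟩ := List.exists_cons_of_ne_nil hsufne
    have hm0M : m0 ∈ M := by
      have := List.head?_dropWhile_not p (b :: rest)
      rw [← hsuf, hsuf'] at this
      simp only [List.head?_cons] at this
      simpa [hp] using this
    have hsufsufr : suf <:+ b :: rest := List.dropWhile_suffix p
    have hsufsuffix : suf <:+ a :: b :: rest := hsufsufr.trans ⟨[a], rfl⟩
    have hsuflen : suf.length ≤ N := by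
      have h1 : suf.length ≤ rest.length + 1 := by
        have := hsufsufr.sublist.length_le
        simpa using this
      simp only [List.length_cons] at hq
      omega
    have hsufch : List.Chain' G.dir suf := List.IsChain.suffix hch hsufsuffix
    have hsufnd : suf.Nodup := (hsufsuffix.sublist).nodup hnd
    have hsuflast : suf.getLast? = (b :: rest).getLast? := by
      conv_rhs => rw [← hps]
      rw [List.getLast?_append, hsuf', List.getLast?_eq_getLast (by simp)]
      rfl
    obtain ⟨ns', hch', hsub', hhead', hlast'⟩ := ih suf hsuflen hsufch hsufnd
      (by intro x hx; rw [hsuf'] at hx; simp at hx; subst hx; exact hm0M)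
      (by intro x hx; rw [hsuflast] at hx; exact hl x (by rw [hqlast]; exact hx))
    have hns'head : ns'.head? = some ⟨m0, hm0M⟩ := by
      rw [hsuf'] at hhead'
      simp only [List.head?_cons] at hhead'
      cases ns' with
      | nil => simp at hhead'
      | cons u t =>
        simp only [List.map_cons, List.head?_cons] at hhead' ⊢
        exact congrArg some (Subtype.ext (Option.some.inj hhead'))
    have hanem0 : a ≠ m0 := by
      intro h
      have hm : m0 ∈ b :: rest := by
        rw [← hps, hsuf']
        exact List.mem_append_right _ List.mem_cons_self
      rw [← h] at hm
      exact (List.nodup_cons.1 hnd).1 hm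
    have hchain_am0 : List.Chain G.dir a (pre ++ [m0]) := by
      have h2 : List.Chain G.dir a (b :: rest) := hch
      rw [← hps, hsuf'] at h2
      have h3 : List.IsChain G.dir (a :: (pre ++ m0 :: suf')) := h2
      exact h3.prefix ⟨suf', by simp⟩
    have hedge : (G.latentProj M).dir ⟨a, ha⟩ ⟨m0, hm0M⟩ := ⟨hanem0, pre, hchain_am0, hpreM⟩
    refine ⟨⟨a, ha⟩ :: ns', ?_, ?_, ?_, ?_⟩
    · show List.IsChain _ _
      rw [List.isChain_cons]
      refine ⟨?_, hch'⟩
      intro y hy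
      rw [hns'head] at hy
      cases hy
      exact hedge
    · rw [List.map_cons]
      exact List.cons_sublist_cons.2 (hsub'.trans hsufsufr.sublist)
    · simp
    · rw [List.map_cons]
      have hne : ns'.map Subtype.val ≠ [] := by
        intro h; rw [h] at hhead'; rw [hsuf'] at hhead'; simp at hhead'
      obtain ⟨u, t, hut⟩ := List.exists_cons_of_ne_nil hne
      rw [hut, List.getLast?_cons_cons, ← hut, hlast', hsuflast, hqlast]

end DMG
end Aux2
section Aux3
namespace DMG
open List
variable {α : Type*}

lemma gei {β : Type*} {l : List β} {i j : ℕ} (hij : i = j) {h1 : i < l.length}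
    {h2 : j < l.length} : l[i]'h1 = l[j]'h2 := by subst hij; rfl

lemma getElem_of_getLast? {β : Type*} {l : List β} {y : β} (h : l.getLast? = some y)
    {i : ℕ} (hi : i = l.length - 1) (hlt : i < l.length) : l[i]'hlt = y := by
  subst hi
  rw [List.getLast?_eq_getElem?, List.getElem?_eq_getElem hlt] at h
  exact Option.some.inj h

lemma getElem_of_head? {β : Type*} {l : List β} {y : β} (h : l.head? = some y)
    (hlt : 0 < l.length) : l[0]'hlt = y := by
  rw [List.head?_eq_getElem?, List.getElem?_eq_getElem hlt] at h
  exact Option.some.inj h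

lemma head?_of_getElem {β : Type*} {l : List β} (h0 : 0 < l.length) :
    l.head? = some (l[0]'h0) := by
  rw [List.head?_eq_getElem?, List.getElem?_eq_getElem h0]

lemma getElem_cons0 {β : Type*} {x : β} {l l' : List β} (h : l = x :: l')
    {h0 : 0 < l.length} : l[0]'h0 = x := by subst h; rfl

lemma getElem_cons_eq {β : Type*} {x : β} {l l' : List β} (h : l = x :: l') (i : ℕ)
    {hi : i < l'.length} {hi2 : i + 1 < l.length} : l[i + 1]'hi2 = l'[i]'hi := by
  subst h; simp

lemma ne_nil_of_head? {β : Type*} {l : List β} {y : β} (h : l.head? = some y) : l ≠ [] := by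
  intro hl; rw [hl] at h; simp at h

end DMG
end Aux3
/-- latent projection preserves confounding; consequently,
unconfoundedness in the projection implies unconfoundedness in `G`. -/
theorem latent_projection_preserves_confounding
    {α : Type*} [Fintype α] (G : DMG α) (M : Set α) (X Y : M) (hXY : X ≠ Y) :
    (G.Confounded X.1 Y.1 → (G.latentProj M).Confounded X Y) ∧
    (¬ (G.latentProj M).Confounded X Y → ¬ G.Confounded X.1 Y.1) := by
  classical
  have main : G.Confounded X.1 Y.1 → (G.latentProj M).Confounded X Y := by
    rintro ⟨w, hpath, hn, hfE, hlE, hnc⟩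
    set n := w.n with hnn
    set ν : ℕ → α := fun t => if h : t ≤ n then w.node ⟨t, by omega⟩ else w.node 0 with hνdef
    set e' : ℕ → EdgeDir := fun t => if h : t < n then w.edge ⟨t, h⟩ else .fwd with hedef
    have hν : ∀ t (h : t ≤ n), ν t = w.node ⟨t, by omega⟩ := by
      intro t h; simp only [hνdef]; rw [dif_pos h]
    have he : ∀ t (h : t < n), e' t = w.edge ⟨t, h⟩ := by
      intro t h; simp only [hedef]; rw [dif_pos h]
    have hν0 : ν 0 = X.1 := by
      rw [hν 0 (by omega)]
      have h0 : (⟨0, by omega⟩ : Fin (n + 1)) = 0 := Fin.ext (by simp)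
      rw [h0]; exact w.first_eq
    have hνn : ν n = Y.1 := by
      rw [hν n le_rfl]
      have h0 : (⟨n, by omega⟩ : Fin (n + 1)) = Fin.last n := Fin.ext (by simp [Fin.last])
      rw [h0]; exact w.last_eq
    have hinj : ∀ i j, i ≤ n → j ≤ n → ν i = ν j → i = j := by
      intro i j hi hj h
      rw [hν i hi, hν j hj] at h
      have h2 := congrArg Fin.val (hpath h)
      exact h2
    have hval : ∀ t, t < n → G.StepValid (ν t) (e' t) (ν (t + 1)) := by
      intro t ht
      rw [hν t (by omega), hν (t + 1) (by omega), he t ht]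
      exact w.valid ⟨t, ht⟩
    have hfE' : (e' 0).headAtLeft := by rw [he 0 hn]; exact hfE
    have hlE' : (e' (n - 1)).headAtRight := by rw [he (n - 1) (by omega)]; exact hlE
    have hnc' : ∀ i, i + 1 < n → ¬ ((e' i).headAtRight ∧ (e' (i + 1)).headAtLeft) := by
      intro i h hcol
      exact hnc i h ⟨by rw [← he i (by omega)]; exact hcol.1,
                     by rw [← he (i + 1) h]; exact hcol.2⟩
    -- the "turning point" k
    have hexk : ∃ j, e' j ≠ EdgeDir.bwd := by
      refine ⟨n - 1, ?_⟩
      rcases hlE' with h | h <;> simp [h]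
    set k := Nat.find hexk with hkdef
    have hkk : e' k ≠ EdgeDir.bwd := Nat.find_spec hexk
    have hkmin : ∀ j, j < k → e' j = EdgeDir.bwd := by
      intro j hj
      have := Nat.find_min hexk hj
      simpa using this
    have hkn : k < n := by
      have h1 : k ≤ n - 1 := Nat.find_le (by rcases hlE' with h | h <;> simp [h])
      omega
    have hkfb : e' k = EdgeDir.fwd ∨ e' k = EdgeDir.bi := by
      cases h : e' k with
      | fwd => exact Or.inl rfl
      | bwd => exact absurd h hkk
      | bi => exact Or.inr rfl
    have hfwd : ∀ j, k < j → j < n → e' j = EdgeDir.fwd := by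
      intro j
      induction j using Nat.strong_induction_on with
      | _ j ih =>
        intro h1 h2
        have hprev : (e' (j - 1)).headAtRight := by
          rcases Nat.eq_or_lt_of_le (show k ≤ j - 1 by omega) with h | h
          · rw [← h]
            rcases hkfb with hh | hh <;> rw [hh]
            · exact Or.inl rfl
            · exact Or.inr rfl
          · rw [ih (j - 1) (by omega) h (by omega)]; exact Or.inl rfl
        have hcol := hnc' (j - 1) (by omega)
        rw [show j - 1 + 1 = j by omega] at hcol
        cases hej : e' j with
        | fwd => rfl
        | bwd => exact absurd ⟨hprev, by rw [hej]; exact Or.inl rfl⟩ hcol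
        | bi => exact absurd ⟨hprev, by rw [hej]; exact Or.inr rfl⟩ hcol
    set k' := if e' k = EdgeDir.bi then k + 1 else k with hk'def
    have hk'1 : k ≤ k' := by rw [hk'def]; split_ifs <;> omega
    have hk'2 : k' ≤ k + 1 := by rw [hk'def]; split_ifs <;> omega
    have hk'n : k' ≤ n := by rw [hk'def]; split_ifs <;> omega
    have hfwd2 : ∀ j, k' ≤ j → j < n → e' j = EdgeDir.fwd := by
      intro j h1 h2
      rcases Nat.lt_or_ge k j with h | h
      · exact hfwd j h h2
      · have hjk : j = k := by omega
        have hnbi : ¬ (e' k = EdgeDir.bi) := by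
          intro hbi
          rw [hk'def, if_pos hbi] at h1
          omega
        subst hjk
        rcases hkfb with hh | hh
        · exact hh
        · exact absurd hh hnbi
    -- jA : the M-node on the walk closest to k from the left
    have hexA : ∃ t, ν (k - t) ∈ M := ⟨k, by rw [Nat.sub_self, hν0]; exact X.2⟩
    set tA := Nat.find hexA with htAdef
    set jA := k - tA with hjAdef
    have hAM : ν jA ∈ M := Nat.find_spec hexA
    have htAk : tA ≤ k := Nat.find_le (by rw [Nat.sub_self, hν0]; exact X.2)
    have hAmin : ∀ j, jA < j → j ≤ k → ν j ∉ M := by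
      intro j h1 h2 hmem
      refine Nat.find_min hexA (show k - j < tA by omega) ?_
      rw [show k - (k - j) = j by omega]
      exact hmem
    have hjAk : jA ≤ k := by omega
    -- jB : the M-node on the walk closest to k' from the right
    have hexB : ∃ t, ν (k' + t) ∈ M := ⟨n - k', by rw [show k' + (n - k') = n by omega, hνn]; exact Y.2⟩
    set tB := Nat.find hexB with htBdef
    set jB := k' + tB with hjBdef
    have hBM : ν jB ∈ M := Nat.find_spec hexB
    have htBn : tB ≤ n - k' := Nat.find_le (by rw [show k' + (n - k') = n by omega, hνn]; exact Y.2)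
    have hBmin : ∀ j, k' ≤ j → j < jB → ν j ∉ M := by
      intro j h1 h2 hmem
      refine Nat.find_min hexB (show j - k' < tB by omega) ?_
      rw [show k' + (j - k') = j by omega]
      exact hmem
    have hjBn : jB ≤ n := by omega
    have hjBk' : k' ≤ jB := by omega
    -- compress the left directed segment  ν jA → ... → ν 0 = X
    have hchainL : List.Chain' G.dir ((List.range (jA + 1)).map (fun t => ν (jA - t))) := by
      apply DMG.chain'_range_map
      intro t ht
      show G.dir (ν (jA - t)) (ν (jA - (t + 1)))
      have hb : e' (jA - (t + 1)) = EdgeDir.bwd := hkmin _ (by omega)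
      have hv := hval (jA - (t + 1)) (by omega)
      rw [hb] at hv
      simp only [DMG.StepValid] at hv
      rw [show jA - (t + 1) + 1 = jA - t by omega] at hv
      exact hv
    have hndL : ((List.range (jA + 1)).map (fun t => ν (jA - t))).Nodup := by
      apply DMG.nodup_range_map
      intro i j hi hj hEq
      have := hinj (jA - i) (jA - j) (by omega) (by omega) hEq
      omega
    obtain ⟨nsL, hchL, hsubL, hheadL, hlastL⟩ := DMG.compress G M _ hchainL hndL
      (by rw [DMG.head?_range_map]; intro x hx; simp only [Option.mem_def, Option.some.injEq] at hx
          subst hx; simpa using hAM)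
      (by rw [DMG.getLast?_range_map]; intro x hx; simp only [Option.mem_def, Option.some.injEq] at hx
          subst hx; rw [Nat.sub_self, hν0]; exact X.2)
    rw [DMG.head?_range_map] at hheadL
    rw [DMG.getLast?_range_map] at hlastL
    rw [Nat.sub_zero] at hheadL
    rw [Nat.sub_self, hν0] at hlastL
    -- compress the right directed segment  ν jB → ... → ν n = Y
    have hchainR : List.Chain' G.dir ((List.range (n - jB + 1)).map (fun t => ν (jB + t))) := by
      apply DMG.chain'_range_map
      intro t ht
      show G.dir (ν (jB + t)) (ν (jB + (t + 1)))
      have hb : e' (jB + t) = EdgeDir.fwd := hfwd2 (jB + t) (by omega) (by omega)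
      have hv := hval (jB + t) (by omega)
      rw [hb] at hv
      simp only [DMG.StepValid] at hv
      rw [show jB + t + 1 = jB + (t + 1) by omega] at hv
      exact hv
    have hndR : ((List.range (n - jB + 1)).map (fun t => ν (jB + t))).Nodup := by
      apply DMG.nodup_range_map
      intro i j hi hj hEq
      have := hinj (jB + i) (jB + j) (by omega) (by omega) hEq
      omega
    obtain ⟨nsR, hchR, hsubR, hheadR, hlastR⟩ := DMG.compress G M _ hchainR hndR
      (by rw [DMG.head?_range_map]; intro x hx; simp only [Option.mem_def, Option.some.injEq] at hx
          subst hx; simpa using hBM)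
      (by rw [DMG.getLast?_range_map]; intro x hx; simp only [Option.mem_def, Option.some.injEq] at hx
          subst hx; rw [show jB + (n - jB) = n by omega, hνn]; exact Y.2)
    rw [DMG.head?_range_map] at hheadR
    rw [DMG.getLast?_range_map] at hlastR
    rw [Nat.add_zero] at hheadR
    rw [show jB + (n - jB) = n by omega, hνn] at hlastR
    -- reversed left list
    set nsLrev := nsL.reverse with hnsLrevdef
    have hrevmap : nsLrev.map Subtype.val = (nsL.map Subtype.val).reverse := by
      rw [hnsLrevdef, List.map_reverse]
    have hheadrev : (nsLrev.map Subtype.val).head? = some X.1 := by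
      rw [hrevmap, List.head?_reverse, hlastL]
    have hlastrev : (nsLrev.map Subtype.val).getLast? = some (ν jA) := by
      rw [hrevmap, List.getLast?_reverse, hheadL]
    have hchrev : List.Chain' (fun u v : M => (G.latentProj M).dir v u) nsLrev := by
      rw [hnsLrevdef]
      show List.IsChain _ _
      rw [List.isChain_reverse]
      exact hchL
    have hsubrev : List.Sublist (nsLrev.map Subtype.val) ((List.range (jA + 1)).map ν) := by
      rw [hrevmap]
      have h2 := hsubL.reverse
      rwa [DMG.reverse_range_map jA ν] at h2
    -- basic shape facts
    have hnsLne : nsL ≠ [] := by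
      intro h; rw [h] at hheadL; simp at hheadL
    have hnsRne : nsR ≠ [] := by
      intro h; rw [h] at hheadR; simp at hheadR
    have hlenrev : nsLrev.length = nsL.length := by rw [hnsLrevdef]; exact List.length_reverse
    have hlenL1 : 1 ≤ nsL.length := by
      cases nsL with
      | nil => exact absurd rfl hnsLne
      | cons a t => simp
    have hlenR1 : 1 ≤ nsR.length := by
      cases nsR with
      | nil => exact absurd rfl hnsRne
      | cons a t => simp
    set c := nsL.length - 1 with hcdef
    have hclt : c < nsLrev.length := by omega
    have hAc : nsLrev[c]'hclt = (⟨ν jA, hAM⟩ : M) := by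
      apply Subtype.ext
      have h1 : (nsLrev.map Subtype.val)[c]'(by rw [List.length_map]; omega) = ν jA :=
        DMG.getElem_of_getLast? hlastrev (by rw [List.length_map]; omega) _
      rw [List.getElem_map] at h1
      exact h1
    have hB0 : nsR[0]'(by omega) = (⟨ν jB, hBM⟩ : M) := by
      apply Subtype.ext
      have h1 : (nsR.map Subtype.val)[0]'(by rw [List.length_map]; omega) = ν jB :=
        DMG.getElem_of_head? hheadR _
      rw [List.getElem_map] at h1
      exact h1
    have hX0 : nsLrev[0]'(by omega) = X := by
      apply Subtype.ext
      have h1 : (nsLrev.map Subtype.val)[0]'(by rw [List.length_map]; omega) = X.1 :=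
        DMG.getElem_of_head? hheadrev _
      rw [List.getElem_map] at h1
      exact h1
    have hndmapL : (nsLrev.map Subtype.val).Nodup :=
      hsubrev.nodup (DMG.nodup_range_map _ _ (fun i j hi hj hEq => hinj i j (by omega) (by omega) hEq))
    have hndmapR : (nsR.map Subtype.val).Nodup :=
      hsubR.nodup hndR
    have hYlast : nsR.getLast? = some Y := by
      have hg : nsR[nsR.length - 1]'(by omega) = Y := by
        apply Subtype.ext
        have h1 : (nsR.map Subtype.val)[nsR.length - 1]'(by rw [List.length_map]; omega) = Y.1 :=
          DMG.getElem_of_getLast? hlastR (by rw [List.length_map]) _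
        rw [List.getElem_map] at h1
        exact h1
      rw [List.getLast?_eq_getElem?, List.getElem?_eq_getElem (by omega), hg]
    by_cases hT : jA = jB
    · -- TURN CASE : jA = k = jB, the walk turns at an M-node
      have hbi' : ¬ e' k = EdgeDir.bi := by
        intro hbi
        have hkp : k' = k + 1 := by rw [hk'def, if_pos hbi]
        omega
      have hk'k : k' = k := by rw [hk'def, if_neg hbi']
      have hjAeq : jA = k := by omega
      have hk1 : 1 ≤ k := by
        by_contra h
        have hk0 : k = 0 := by omega
        rcases hkfb with hh | hh
        · rw [hk0] at hh; rw [hh] at hfE'; rcases hfE' with h2 | h2 <;> simp at h2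
        · exact hbi' hh
      obtain ⟨B', nsR', hnsR'⟩ := List.exists_cons_of_ne_nil hnsRne
      have hB'val : B' = (⟨ν jB, hBM⟩ : M) := by
        have h1 : nsR[0]'(by omega) = B' := DMG.getElem_cons0 hnsR'
        exact h1.symm.trans hB0
      have hBneY : B' ≠ Y := by
        intro h
        have h2 : ν jB = Y.1 := by rw [← h, hB'val]
        rw [← hνn] at h2
        have := hinj jB n (by omega) (by omega) h2
        omega
      have hnsR'ne : nsR' ≠ [] := by
        intro h
        rw [hnsR', h] at hYlast
        simp at hYlast
        exact hBneY hYlast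
      have hlenR' : nsR.length = nsR'.length + 1 := by rw [hnsR']; simp
      have hlenR'1 : 1 ≤ nsR'.length := by
        cases nsR' with
        | nil => exact absurd rfl hnsR'ne
        | cons a t => simp
      have hne0 : ν jA ≠ ν 0 := by
        intro hEq
        have := hinj jA 0 (by omega) (by omega) hEq
        omega
      have hcpos : 0 < c := by
        by_contra h
        have hlen1 : nsL.length = 1 := by omega
        obtain ⟨u, hu⟩ := List.length_eq_one_iff.1 hlen1
        rw [hu] at hheadL hlastL
        simp only [List.map_cons, List.map_nil, List.head?_cons, List.getLast?_singleton,
          Option.some.injEq] at hheadL hlastL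
        exact hne0 (by rw [← hheadL, hlastL]; exact hν0.symm)
      set E : ℕ → EdgeDir := fun t => if t < c then EdgeDir.bwd else EdgeDir.fwd with hEdef
      have hE1 : ∀ j, j < c → E j = EdgeDir.bwd := by
        intro j hj; simp only [hEdef]; rw [if_pos hj]
      have hE3' : ∀ j, c ≤ j → E j = EdgeDir.fwd := by
        intro j hj; simp only [hEdef]; rw [if_neg (by omega)]
      have hlenapp : (nsLrev ++ nsR').length = nsLrev.length + nsR'.length :=
        List.length_append
      refine DMG.confounded_of_list (G.latentProj M) X Y (nsLrev ++ nsR') E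
        (by rw [List.length_append]; omega) ?_ ?_ ?_ ?_ ?_ ?_ c hE1 (fun j hj => hE3' j (by omega))
      · -- head
        have h0 : (0:ℕ) < (nsLrev ++ nsR').length := by rw [hlenapp]; omega
        rw [DMG.head?_of_getElem h0]
        have e0 : (nsLrev ++ nsR')[0]'h0 = nsLrev[0]'(by omega) :=
          List.getElem_append_left (by omega)
        rw [e0, hX0]
      · -- last
        have hY' : nsR'.getLast? = some Y := by
          obtain ⟨r0, rr, hrr⟩ := List.exists_cons_of_ne_nil hnsR'ne
          rw [hnsR', hrr, List.getLast?_cons_cons] at hYlast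
          rw [hrr]
          exact hYlast
        rw [List.getLast?_append, hY']
        rfl
      · -- nodup
        apply List.Nodup.of_map Subtype.val
        rw [List.map_append, List.nodup_append]
        have hndR'map : (nsR'.map Subtype.val).Nodup := by
          have h4 := hndmapR
          rw [hnsR', List.map_cons, List.nodup_cons] at h4
          exact h4.2
        have hBnotin : B'.1 ∉ nsR'.map Subtype.val := by
          have h4 := hndmapR
          rw [hnsR', List.map_cons, List.nodup_cons] at h4
          exact h4.1
        refine ⟨hndmapL, hndR'map, ?_⟩
        intro x hx1 x' hx2 hxx
        subst hxx
        obtain ⟨t1, ht1, hEq1⟩ := DMG.mem_range_map (hsubrev.subset hx1)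
        have hx2' : x ∈ nsR.map Subtype.val := by
          rw [hnsR', List.map_cons]
          exact List.mem_cons_of_mem _ hx2
        obtain ⟨t2, ht2, hEq2⟩ := DMG.mem_range_map (hsubR.subset hx2')
        have hxne : x ≠ ν jB := by
          intro h
          apply hBnotin
          have h5 : B'.1 = x := by rw [hB'val, h]
          rw [h5]
          exact hx2
        rcases Nat.eq_zero_or_pos t2 with h2 | h2
        · exact hxne (by rw [hEq2, h2, Nat.add_zero])
        · have := hinj t1 (jB + t2) (by omega) (by omega) (by rw [← hEq1, ← hEq2])
          omega
      · -- validity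
        intro t ht
        rw [hlenapp] at ht
        rcases Nat.lt_or_ge t c with h1 | h1
        · rw [hE1 t h1]
          have e1 : (nsLrev ++ nsR')[t]'(by omega) = nsLrev[t]'(by omega) :=
            List.getElem_append_left (by omega)
          have e2 : (nsLrev ++ nsR')[t + 1]'(by omega) = nsLrev[t + 1]'(by omega) :=
            List.getElem_append_left (by omega)
          have h3 := List.isChain_iff_getElem.1 hchrev t (by omega)
          
          rw [e1, e2]
          exact h3
        · rcases Nat.eq_or_lt_of_le h1 with h2 | h2
          · subst h2
            rw [hE3' c le_rfl]
            have hABs : (⟨ν jA, hAM⟩ : M) = ⟨ν jB, hBM⟩ := Subtype.ext (congrArg ν hT)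
            have e1 : (nsLrev ++ nsR')[c]'(by omega) = nsLrev[c]'hclt :=
              List.getElem_append_left (by omega)
            have e2 : (nsLrev ++ nsR')[c + 1]'(by omega) = nsR'[c + 1 - nsLrev.length]'(by omega) :=
              List.getElem_append_right (by omega)
            have e3 : nsR'[c + 1 - nsLrev.length]'(by omega) = nsR'[0]'(by omega) :=
              DMG.gei (by omega)
            have e4 : nsR'[0]'(by omega) = nsR[0 + 1]'(by omega) :=
              (DMG.getElem_cons_eq hnsR' 0).symm
            have h3 := List.isChain_iff_getElem.1 hchR 0 (by omega)
            
            rw [hB0] at h3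
            rw [e1, e2, e3, e4, hAc, hABs]
            exact h3
          · rw [hE3' t (by omega)]
            have e1 : (nsLrev ++ nsR')[t]'(by omega) = nsR'[t - nsLrev.length]'(by omega) :=
              List.getElem_append_right (by omega)
            have e2 : (nsLrev ++ nsR')[t + 1]'(by omega) = nsR'[t + 1 - nsLrev.length]'(by omega) :=
              List.getElem_append_right (by omega)
            have e3 : nsR'[t + 1 - nsLrev.length]'(by omega) = nsR'[(t - nsLrev.length) + 1]'(by omega) :=
              DMG.gei (by omega)
            have e4 : nsR'[t - nsLrev.length]'(by omega) =
                nsR[(t - nsLrev.length) + 1]'(by omega) :=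
              (DMG.getElem_cons_eq hnsR' (t - nsLrev.length)).symm
            have e5 : nsR'[(t - nsLrev.length) + 1]'(by omega) =
                nsR[((t - nsLrev.length) + 1) + 1]'(by omega) :=
              (DMG.getElem_cons_eq hnsR' ((t - nsLrev.length) + 1)).symm
            have h3 := List.isChain_iff_getElem.1 hchR ((t - nsLrev.length) + 1) (by omega)
            
            rw [e1, e2, e3, e4, e5]
            exact h3
      · rw [hE1 0 hcpos]; exact Or.inl rfl
      · rw [hE3' ((nsLrev ++ nsR').length - 2) (by rw [hlenapp]; omega)]
        exact Or.inl rfl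
    · -- BI-EDGE CASE : jA < jB, a bidirected edge appears in the projection
      have hAB : jA < jB := by omega
      have hjBgtk : k < jB := by
        rcases Nat.lt_or_ge k jB with h | h
        · exact h
        · exfalso
          have hjBk2 : jB = k := by omega
          have h0 : ν (k - 0) ∈ M := by rw [Nat.sub_zero, ← hjBk2]; exact hBM
          have h1 : tA ≤ 0 := Nat.find_le h0
          omega
      have hfirstmid : (e' jA).headAtLeft := by
        rcases Nat.lt_or_ge jA k with h | h
        · rw [hkmin jA h]; exact Or.inl rfl
        · have hjAk2 : jA = k := by omega
          by_cases hbi : e' k = EdgeDir.bi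
          · rw [hjAk2, hbi]; exact Or.inr rfl
          · exfalso
            have hkk2 : k' = k := by rw [hk'def, if_neg hbi]
            have h0 : ν (k' + 0) ∈ M := by rw [Nat.add_zero, hkk2, ← hjAk2]; exact hAM
            have h1 : tB ≤ 0 := Nat.find_le h0
            omega
      have hlastmid : (e' (jB - 1)).headAtRight := by
        rcases Nat.lt_or_ge k (jB - 1) with h | h
        · rw [hfwd (jB - 1) h (by omega)]; exact Or.inl rfl
        · have hEq : jB - 1 = k := by omega
          rw [hEq]
          rcases hkfb with hh | hh <;> rw [hh]
          · exact Or.inl rfl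
          · exact Or.inr rfl
      have hbpa : DMG.BidirPathAvoiding G M (ν jA) (ν jB) := by
        refine ⟨DMG.Walk.ofFn G (jB - jA) (fun t => ν (jA + t)) (fun t => e' (jA + t))
          (by simp) (by show ν (jA + (jB - jA)) = ν jB; congr 1; omega)
          (fun t ht => hval (jA + t) (by omega)), ?_, ⟨?_, ?_, ?_⟩, ?_⟩
        · intro i j hEq
          have hi := i.isLt; have hj := j.isLt
          simp only [DMG.Walk.ofFn_n] at hi hj
          have := hinj (jA + i.val) (jA + j.val) (by omega) (by omega) hEq
          exact Fin.ext (by omega)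
        · show 0 < jB - jA
          omega
        · show (e' (jA + 0)).headAtLeft
          simpa using hfirstmid
        · show (e' (jA + (jB - jA - 1))).headAtRight
          rw [show jA + (jB - jA - 1) = jB - 1 by omega]
          exact hlastmid
        · intro i hi
          have hi' : i + 1 < jB - jA := hi
          constructor
          · show ν (jA + (i + 1)) ∉ M
            rcases le_or_gt (jA + (i + 1)) k with h | h
            · exact hAmin (jA + (i + 1)) (by omega) h
            · exact hBmin (jA + (i + 1)) (by omega) (by omega)
          · intro hcol
            obtain ⟨h1, h2⟩ := hcol
            exact hnc' (jA + i) (by omega) ⟨h1, h2⟩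
      have hbid : (G.latentProj M).bidir ⟨ν jA, hAM⟩ ⟨ν jB, hBM⟩ := by
        refine ⟨?_, Or.inl hbpa⟩
        intro hEq
        exact hT (hinj jA jB (by omega) (by omega) hEq)
      set E : ℕ → EdgeDir :=
        fun t => if t < c then EdgeDir.bwd else if t = c then EdgeDir.bi else EdgeDir.fwd with hEdef
      have hE1 : ∀ j, j < c → E j = EdgeDir.bwd := by
        intro j hj; simp only [hEdef]; rw [if_pos hj]
      have hE2 : E c = EdgeDir.bi := by
        simp only [hEdef]
        rw [if_neg (show ¬ c < c by omega)]
        simp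
      have hE3 : ∀ j, c < j → E j = EdgeDir.fwd := by
        intro j hj; simp only [hEdef]; rw [if_neg (by omega), if_neg (by omega)]
      have hlenapp : (nsLrev ++ nsR).length = nsLrev.length + nsR.length :=
        List.length_append
      refine DMG.confounded_of_list (G.latentProj M) X Y (nsLrev ++ nsR) E
        (by rw [List.length_append]; omega) ?_ ?_ ?_ ?_ ?_ ?_ c hE1 hE3
      · -- head
        have h0 : (0:ℕ) < (nsLrev ++ nsR).length := by rw [hlenapp]; omega
        rw [DMG.head?_of_getElem h0]
        have e0 : (nsLrev ++ nsR)[0]'h0 = nsLrev[0]'(by omega) :=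
          List.getElem_append_left (by omega)
        rw [e0, hX0]
      · -- last
        rw [List.getLast?_append, hYlast]
        rfl
      · -- nodup
        apply List.Nodup.of_map Subtype.val
        rw [List.map_append, List.nodup_append]
        refine ⟨hndmapL, hndmapR, ?_⟩
        intro x hx1 x' hx2 hxx
        subst hxx
        obtain ⟨t1, ht1, hEq1⟩ := DMG.mem_range_map (hsubrev.subset hx1)
        obtain ⟨t2, ht2, hEq2⟩ := DMG.mem_range_map (hsubR.subset hx2)
        have := hinj t1 (jB + t2) (by omega) (by omega) (by rw [← hEq1, ← hEq2])
        omega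
      · -- validity
        intro t ht
        rw [hlenapp] at ht
        rcases Nat.lt_or_ge t c with h1 | h1
        · rw [hE1 t h1]
          have e1 : (nsLrev ++ nsR)[t]'(by omega) = nsLrev[t]'(by omega) :=
            List.getElem_append_left (by omega)
          have e2 : (nsLrev ++ nsR)[t + 1]'(by omega) = nsLrev[t + 1]'(by omega) :=
            List.getElem_append_left (by omega)
          have h3 := List.isChain_iff_getElem.1 hchrev t (by omega)
          
          rw [e1, e2]
          exact h3
        · rcases Nat.eq_or_lt_of_le h1 with h2 | h2
          · subst h2
            rw [hE2]
            have e1 : (nsLrev ++ nsR)[c]'(by omega) = nsLrev[c]'hclt :=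
              List.getElem_append_left (by omega)
            have e2 : (nsLrev ++ nsR)[c + 1]'(by omega) = nsR[c + 1 - nsLrev.length]'(by omega) :=
              List.getElem_append_right (by omega)
            have e3 : nsR[c + 1 - nsLrev.length]'(by omega) = nsR[0]'(by omega) :=
              DMG.gei (by omega)
            rw [e1, e2, e3, hAc, hB0]
            exact hbid
          · rw [hE3 t h2]
            have e1 : (nsLrev ++ nsR)[t]'(by omega) = nsR[t - nsLrev.length]'(by omega) :=
              List.getElem_append_right (by omega)
            have e2 : (nsLrev ++ nsR)[t + 1]'(by omega) = nsR[t + 1 - nsLrev.length]'(by omega) :=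
              List.getElem_append_right (by omega)
            have e3 : nsR[t + 1 - nsLrev.length]'(by omega) = nsR[(t - nsLrev.length) + 1]'(by omega) :=
              DMG.gei (by omega)
            have h3 := List.isChain_iff_getElem.1 hchR (t - nsLrev.length) (by omega)
            
            rw [e1, e2, e3]
            exact h3
      · rcases Nat.eq_zero_or_pos c with h | h
        · rw [h] at hE2; rw [hE2]; exact Or.inr rfl
        · rw [hE1 0 h]; exact Or.inl rfl
      · rcases Nat.eq_or_lt_of_le (show c ≤ (nsLrev ++ nsR).length - 2 by rw [hlenapp]; omega)
          with h | h
        · rw [← h, hE2]; exact Or.inr rfl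
        · rw [hE3 _ h]; exact Or.inl rfl
  exact ⟨main, fun h hc => h (main hc)⟩
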